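/- arXiv:math/0606590 — 8 statements merged into one kernel-verified Lean document; each statement's English description precedes it below -/
import Mathlib

section
/- If f : ℝ → ℝ is convex on [m, M], x₁, ..., xₙ are self-adjoint n×n complex matrices with spectra in [m, M], and φ₁, ..., φₙ are positive linear maps on matrices with ∑ᵢ φᵢ(1) = 1, then ∑ᵢ φᵢ(f(xᵢ)) ≤ α_f · ∑ᵢ φᵢ(xᵢ) + β_f · 1, where α_f = (f(M) − f(m))/(M − m) and β_f = (M f(m) − m f(M))/(M − m), and f is applied via the functional calculus. -/
set_option maxHeartbeats 1000000

open Matrix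
open scoped ComplexOrder Classical

/-- Functional calculus for (Hermitian) matrices via the spectral theorem. -/
noncomputable def fc {n : ℕ} (f : ℝ → ℝ) (A : Matrix (Fin n) (Fin n) ℂ) :
    Matrix (Fin n) (Fin n) ℂ :=
  if h : A.IsHermitian then
    (h.eigenvectorUnitary : Matrix (Fin n) (Fin n) ℂ) *
      Matrix.diagonal (fun i => (f (h.eigenvalues i) : ℂ)) *
      (star h.eigenvectorUnitary : Matrix (Fin n) (Fin n) ℂ)
  else 0

/-- The Loewner order: `A ≤ B` iff `B - A` is positive semidefinite. -/
def Loewner {n : ℕ} (A B : Matrix (Fin n) (Fin n) ℂ) : Prop := (B - A).PosSemidef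

/-- The operator norm of a matrix acting on Euclidean space. -/
noncomputable def opNorm {n : ℕ} (A : Matrix (Fin n) (Fin n) ℂ) : ℝ :=
  ‖Matrix.toEuclideanCLM (𝕜 := ℂ) (n := Fin n) A‖

lemma key_ineq {m M : ℝ} (hmM : m < M) {f : ℝ → ℝ} (hf : ConvexOn ℝ (Set.Icc m M) f)
    {t : ℝ} (ht : t ∈ Set.Icc m M) :
    f t ≤ (f M - f m) / (M - m) * t + (M * f m - m * f M) / (M - m) := by
  have hMm : (0:ℝ) < M - m := by linarith
  have hne : M - m ≠ 0 := hMm.ne'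
  set a := (M - t) / (M - m) with ha
  set b := (t - m) / (M - m) with hb
  have ha0 : 0 ≤ a := div_nonneg (by linarith [ht.2]) hMm.le
  have hb0 : 0 ≤ b := div_nonneg (by linarith [ht.1]) hMm.le
  have hab : a + b = 1 := by rw [ha, hb, ← add_div, div_eq_one_iff_eq hne]; ring
  have hta : a • m + b • M = t := by
    rw [smul_eq_mul, smul_eq_mul, ha, hb, div_mul_eq_mul_div, div_mul_eq_mul_div,
      ← add_div, div_eq_iff hne]; ring
  have h := hf.2 (Set.left_mem_Icc.mpr hmM.le) (Set.right_mem_Icc.mpr hmM.le) ha0 hb0 hab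
  rw [hta] at h
  refine h.trans (le_of_eq ?_)
  rw [smul_eq_mul, smul_eq_mul, ha, hb, div_mul_eq_mul_div, div_mul_eq_mul_div,
    ← add_div, div_mul_eq_mul_div, ← add_div, div_eq_div_iff hne hne]
  ring

lemma key_mat {n : ℕ} {m M : ℝ} (hmM : m < M) {f : ℝ → ℝ}
    (hf : ConvexOn ℝ (Set.Icc m M) f) {A : Matrix (Fin n) (Fin n) ℂ}
    (hA : A.IsHermitian) (hs : ∀ j, hA.eigenvalues j ∈ Set.Icc m M) :
    (((f M - f m) / (M - m) : ℝ) • A + ((M * f m - m * f M) / (M - m) : ℝ) • 1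
      - fc f A).PosSemidef := by
  set α := (f M - f m) / (M - m) with hα
  set β := (M * f m - m * f M) / (M - m) with hβ
  set U : Matrix (Fin n) (Fin n) ℂ := (hA.eigenvectorUnitary : Matrix (Fin n) (Fin n) ℂ) with hUdef
  have hU : U * Uᴴ = 1 := Matrix.mem_unitaryGroup_iff.mp hA.eigenvectorUnitary.2
  have hAeq : A = U * Matrix.diagonal (fun j => (hA.eigenvalues j : ℂ)) * Uᴴ := by
    rw [hUdef, ← Matrix.star_eq_conjTranspose]; exact hA.spectral_theorem
  have hfc : fc f A = U * Matrix.diagonal (fun j => (f (hA.eigenvalues j) : ℂ)) * Uᴴ := by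
    rw [fc, dif_pos hA]; rfl
  set D : Matrix (Fin n) (Fin n) ℂ :=
    Matrix.diagonal (fun j => ((α * hA.eigenvalues j + β - f (hA.eigenvalues j) : ℝ) : ℂ)) with hDdef
  have hD : (α : ℝ) • Matrix.diagonal (fun j => (hA.eigenvalues j : ℂ))
      + (β : ℝ) • (1 : Matrix (Fin n) (Fin n) ℂ)
      - Matrix.diagonal (fun j => (f (hA.eigenvalues j) : ℂ)) = D := by
    ext i j
    rw [hDdef]
    by_cases h : i = j
    · subst h
      simp only [Matrix.sub_apply, Matrix.add_apply, Matrix.smul_apply,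
        Matrix.diagonal_apply_eq, Matrix.one_apply_eq, Complex.real_smul, smul_eq_mul, mul_one]
      push_cast; ring
    · simp [Matrix.diagonal_apply_ne _ h, Matrix.one_apply_ne h]
  have expand : U * ((α : ℝ) • Matrix.diagonal (fun j => (hA.eigenvalues j : ℂ))
      + (β : ℝ) • (1 : Matrix (Fin n) (Fin n) ℂ)
      - Matrix.diagonal (fun j => (f (hA.eigenvalues j) : ℂ))) * Uᴴ =
      (α : ℝ) • (U * Matrix.diagonal (fun j => (hA.eigenvalues j : ℂ)) * Uᴴ)
      + (β : ℝ) • (1 : Matrix (Fin n) (Fin n) ℂ)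
      - U * Matrix.diagonal (fun j => (f (hA.eigenvalues j) : ℂ)) * Uᴴ := by
    simp only [Matrix.mul_add, Matrix.add_mul, Matrix.mul_sub, Matrix.sub_mul,
      Matrix.mul_smul, Matrix.smul_mul, Matrix.mul_one, hU]
  have main : (α : ℝ) • A + (β : ℝ) • 1 - fc f A = U * D * Uᴴ := by
    rw [hfc, ← hD, expand, ← hAeq]
  rw [main]
  apply Matrix.PosSemidef.mul_mul_conjTranspose_same
  refine Matrix.posSemidef_diagonal_iff.mpr fun j => ?_
  have := key_ineq hmM hf (hs j)
  rw [← Complex.ofReal_zero, Complex.real_le_real]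
  linarith

theorem stmt_0 {n N : ℕ} (m M : ℝ) (hmM : m < M) (f : ℝ → ℝ)
    (hf : ConvexOn ℝ (Set.Icc m M) f)
    (x : Fin N → Matrix (Fin n) (Fin n) ℂ) (hx : ∀ i, (x i).IsHermitian)
    (hspec : ∀ i j, (hx i).eigenvalues j ∈ Set.Icc m M)
    (φ : Fin N → (Matrix (Fin n) (Fin n) ℂ →ₗ[ℂ] Matrix (Fin n) (Fin n) ℂ))
    (hφ : ∀ i A, A.PosSemidef → (φ i A).PosSemidef)
    (hunital : ∑ i, φ i 1 = 1) :
    Loewner (∑ i, φ i (fc f (x i)))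
      (((f M - f m) / (M - m) : ℝ) • ∑ i, φ i (x i) +
        ((M * f m - m * f M) / (M - m) : ℝ) • (1 : Matrix (Fin n) (Fin n) ℂ)) := by
  set α := (f M - f m) / (M - m) with hα
  set β := (M * f m - m * f M) / (M - m) with hβ
  have key : (∑ i, φ i ((α : ℝ) • x i + (β : ℝ) • (1 : Matrix (Fin n) (Fin n) ℂ)
      - fc f (x i))).PosSemidef := by
    apply Finset.sum_induction _ (fun A => Matrix.PosSemidef A)
      (fun a b ha hb => ha.add hb) Matrix.PosSemidef.zero
    intro i _
    exact hφ i _ (key_mat hmM hf (hx i) (hspec i))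
  have hsmul : ∀ (r : ℝ) (A : Matrix (Fin n) (Fin n) ℂ) (i : Fin N),
      φ i (r • A) = r • φ i A := fun r A i => by
    rw [← algebraMap_smul ℂ r A, _root_.map_smul, algebraMap_smul]
  have heq : (∑ i, φ i ((α : ℝ) • x i + (β : ℝ) • (1 : Matrix (Fin n) (Fin n) ℂ)
      - fc f (x i))) =
      ((α : ℝ) • ∑ i, φ i (x i) + (β : ℝ) • (1 : Matrix (Fin n) (Fin n) ℂ))
        - ∑ i, φ i (fc f (x i)) := by
    calc (∑ i, φ i ((α : ℝ) • x i + (β : ℝ) • (1 : Matrix (Fin n) (Fin n) ℂ) - fc f (x i)))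
        = ∑ i, ((α : ℝ) • φ i (x i) + (β : ℝ) • φ i 1 - φ i (fc f (x i))) := by
          refine Finset.sum_congr rfl fun i _ => ?_
          rw [map_sub, map_add, hsmul, hsmul]
      _ = (α : ℝ) • ∑ i, φ i (x i) + (β : ℝ) • ∑ i, φ i 1 - ∑ i, φ i (fc f (x i)) := by
          rw [Finset.sum_sub_distrib, Finset.sum_add_distrib, ← Finset.smul_sum,
            ← Finset.smul_sum]
      _ = ((α : ℝ) • ∑ i, φ i (x i) + (β : ℝ) • (1 : Matrix (Fin n) (Fin n) ℂ))
            - ∑ i, φ i (fc f (x i)) := by rw [hunital]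
  rw [Loewner, ← heq]
  exact key
end

section
/- Let f : ℝ → ℝ be convex on [m, M] with subdifferential function k (i.e., k(t) ∈ [f'₋(t), f'₊(t)] for t ∈ (m,M), k(m) = f'₊(m), k(M) = f'₋(M)). If x is a self-adjoint n×n complex matrix with spectrum in [m, M] and φ is a unital positive linear map on matrices, then for every y ∈ [m, M]: f(y)·1 + k(y)·(φ(x) − y·1) ≤ φ(f(x)). -/
open Matrix
open scoped ComplexOrder Classical

theorem stmt_1 {n : ℕ} (m M : ℝ) (hmM : m < M) (f k : ℝ → ℝ)
    (hf : ConvexOn ℝ (Set.Icc m M) f)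
    (hk : ∀ y ∈ Set.Icc m M, ∀ t ∈ Set.Icc m M, f y + k y * (t - y) ≤ f t)
    (x : Matrix (Fin n) (Fin n) ℂ) (hx : x.IsHermitian)
    (hspec : ∀ j, hx.eigenvalues j ∈ Set.Icc m M)
    (φ : Matrix (Fin n) (Fin n) ℂ →ₗ[ℂ] Matrix (Fin n) (Fin n) ℂ)
    (hφ : ∀ A, A.PosSemidef → (φ A).PosSemidef) (hunital : φ 1 = 1)
    (y : ℝ) (hy : y ∈ Set.Icc m M) :
    Loewner ((f y : ℝ) • (1 : Matrix (Fin n) (Fin n) ℂ) +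
        (k y : ℝ) • (φ x - (y : ℝ) • (1 : Matrix (Fin n) (Fin n) ℂ)))
      (φ (fc f x)) := by
  set U : Matrix (Fin n) (Fin n) ℂ := (hx.eigenvectorUnitary : Matrix (Fin n) (Fin n) ℂ)
  have hUU : U * star U = 1 := (Matrix.mem_unitaryGroup_iff).mp hx.eigenvectorUnitary.2
  -- the matrix inequality before applying φ
  set Dlam : Matrix (Fin n) (Fin n) ℂ := Matrix.diagonal (RCLike.ofReal ∘ hx.eigenvalues)
  have hspx : x = U * Dlam * star U := hx.spectral_theorem
  have key : (fc f x - ((f y : ℂ) • 1 + (k y : ℂ) • (x - (y : ℂ) • 1))).PosSemidef := by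
    have hD : Matrix.diagonal
        (fun i => ((f y + k y * (hx.eigenvalues i - y) : ℝ) : ℂ)) =
        (f y : ℂ) • 1 + (k y : ℂ) • (Dlam - (y : ℂ) • 1) := by
      ext i j
      by_cases h : i = j
      · subst h
        simp [Matrix.diagonal, Dlam, Function.comp]
        try push_cast
        try ring
      · simp [Matrix.diagonal, Matrix.one_apply_ne h, h, Dlam]
    have hmid : U * Matrix.diagonal
        (fun i => ((f y + k y * (hx.eigenvalues i - y) : ℝ) : ℂ)) * star U =
        (f y : ℂ) • 1 + (k y : ℂ) • (x - (y : ℂ) • 1) := by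
      rw [hD]
      simp only [Matrix.mul_add, Matrix.add_mul, Matrix.mul_sub, Matrix.sub_mul,
        Matrix.mul_smul, Matrix.smul_mul, Matrix.mul_one, mul_one, hUU, ← hspx]
    have hdiag : fc f x - ((f y : ℂ) • 1 + (k y : ℂ) • (x - (y : ℂ) • 1)) =
        U * Matrix.diagonal
          (fun i => ((f (hx.eigenvalues i) - (f y + k y * (hx.eigenvalues i - y)) : ℝ) : ℂ))
          * star U := by
      rw [fc, dif_pos hx, ← hmid, ← Matrix.sub_mul, ← Matrix.mul_sub, Matrix.diagonal_sub]
      push_cast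
      rfl
    rw [hdiag]
    have hpsd : (Matrix.diagonal
        (fun i => ((f (hx.eigenvalues i) - (f y + k y * (hx.eigenvalues i - y)) : ℝ) : ℂ))).PosSemidef := by
      rw [Matrix.posSemidef_diagonal_iff]
      intro i
      have := hk y hy (hx.eigenvalues i) (hspec i)
      have h0 : (0:ℝ) ≤ f (hx.eigenvalues i) - (f y + k y * (hx.eigenvalues i - y)) := by linarith
      exact_mod_cast h0
    simpa [Matrix.star_eq_conjTranspose] using hpsd.mul_mul_conjTranspose_same U
  have hφkey := hφ _ key
  rw [map_sub, map_add, _root_.map_smul, _root_.map_smul, map_sub, _root_.map_smul,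
    hunital] at hφkey
  unfold Loewner
  convert hφkey using 2
  all_goals ext i j; simp [Complex.real_smul, Matrix.sub_apply, Matrix.smul_apply]
end

section
/- Let f : ℝ → ℝ be convex on [m, M] with subdifferential function k. If x is a self-adjoint n×n complex matrix with spectrum in [m, M] and φ is a unital positive linear map on matrices, then for every s ∈ [m, M]: φ(f(x)) ≤ f(s)·1 − s·φ(k(x)) + φ(k(x)·x), where k(x) and k(x)·x are defined by the (Borel) functional calculus. -/
open Matrix
open scoped ComplexOrder Classical

theorem stmt_2 {n : ℕ} (m M : ℝ) (hmM : m < M) (f k : ℝ → ℝ)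
    (hf : ConvexOn ℝ (Set.Icc m M) f)
    (hk : ∀ y ∈ Set.Icc m M, ∀ t ∈ Set.Icc m M, f y + k y * (t - y) ≤ f t)
    (x : Matrix (Fin n) (Fin n) ℂ) (hx : x.IsHermitian)
    (hspec : ∀ j, hx.eigenvalues j ∈ Set.Icc m M)
    (φ : Matrix (Fin n) (Fin n) ℂ →ₗ[ℂ] Matrix (Fin n) (Fin n) ℂ)
    (hφ : ∀ A, A.PosSemidef → (φ A).PosSemidef) (hunital : φ 1 = 1)
    (s : ℝ) (hs : s ∈ Set.Icc m M) :
    Loewner (φ (fc f x))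
      ((f s : ℝ) • (1 : Matrix (Fin n) (Fin n) ℂ) - (s : ℝ) • φ (fc k x) +
        φ (fc (fun t => k t * t) x)) := by

  classical
  set g : ℝ → ℝ := fun t => f s - s * k t + k t * t with hg
  set U : Matrix (Fin n) (Fin n) ℂ := (hx.eigenvectorUnitary : Matrix (Fin n) (Fin n) ℂ) with hU
  have hUU : U * star U = 1 := Unitary.mul_star_self_of_mem hx.eigenvectorUnitary.2
  have fceq : ∀ p : ℝ → ℝ, fc p x =
      U * Matrix.diagonal (fun i => (p (hx.eigenvalues i) : ℂ)) * star U := by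
    intro p; simp [fc, hx, hU]
  have hsmul : ∀ (r : ℝ) (A : Matrix (Fin n) (Fin n) ℂ), r • A = (r : ℂ) • A := by
    intro r A; ext i j; simp [Complex.real_smul]
  have key : fc g x = (f s : ℝ) • (1 : Matrix (Fin n) (Fin n) ℂ) - (s : ℝ) • fc k x
      + fc (fun t => k t * t) x := by
    rw [fceq, fceq, fceq, hsmul, hsmul]
    have hd : (Matrix.diagonal fun i => ((g (hx.eigenvalues i) : ℝ) : ℂ))
        = (f s : ℂ) • (1 : Matrix (Fin n) (Fin n) ℂ)
          - (s : ℂ) • Matrix.diagonal (fun i => (k (hx.eigenvalues i) : ℂ))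
          + Matrix.diagonal (fun i => ((k (hx.eigenvalues i) * hx.eigenvalues i : ℝ) : ℂ)) := by
      ext i j
      rcases eq_or_ne i j with h | h
      · subst h
        simp only [Matrix.diagonal_apply_eq, Matrix.add_apply, Matrix.sub_apply,
          Matrix.smul_apply, Matrix.one_apply_eq, smul_eq_mul, hg]
        push_cast; ring
      · simp [Matrix.diagonal_apply_ne _ h, Matrix.one_apply_ne h]
    rw [hd]
    rw [Matrix.mul_add, Matrix.add_mul, Matrix.mul_sub, Matrix.sub_mul]
    rw [Matrix.mul_smul, Matrix.smul_mul, Matrix.mul_smul, Matrix.smul_mul, Matrix.mul_one, hUU]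
  have hdiff : (fc g x - fc f x).PosSemidef := by
    rw [fceq, fceq]
    have : U * Matrix.diagonal (fun i => ((g (hx.eigenvalues i) : ℝ) : ℂ)) * star U
        - U * Matrix.diagonal (fun i => ((f (hx.eigenvalues i) : ℝ) : ℂ)) * star U
        = U * Matrix.diagonal (fun i => ((g (hx.eigenvalues i) - f (hx.eigenvalues i) : ℝ) : ℂ)) * star U := by
      rw [← Matrix.sub_mul, ← Matrix.mul_sub]
      congr 2
      ext i j
      rcases eq_or_ne i j with h | h
      · subst h; simp [Matrix.diagonal_apply_eq]
      · simp [Matrix.diagonal_apply_ne _ h]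
    rw [this]
    have hps : (Matrix.diagonal fun i =>
        ((g (hx.eigenvalues i) - f (hx.eigenvalues i) : ℝ) : ℂ)).PosSemidef := by
      rw [Matrix.posSemidef_diagonal_iff]
      intro i
      have h1 := hk (hx.eigenvalues i) (hspec i) s hs
      have h2 : f (hx.eigenvalues i) ≤ g (hx.eigenvalues i) := by
        simp only [hg]; nlinarith [h1]
      have : (0:ℝ) ≤ g (hx.eigenvalues i) - f (hx.eigenvalues i) := by linarith
      exact_mod_cast this
    have := hps.mul_mul_conjTranspose_same U
    simpa [Matrix.star_eq_conjTranspose] using this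
  have hφdiff := hφ _ hdiff
  have heq : φ (fc g x) - φ (fc f x)
      = (f s : ℝ) • (1 : Matrix (Fin n) (Fin n) ℂ) - (s : ℝ) • φ (fc k x)
        + φ (fc (fun t => k t * t) x) - φ (fc f x) := by
    simp only [key, hsmul, map_add, map_sub, _root_.map_smul, hunital]
  rw [map_sub] at hφdiff
  unfold Loewner
  rw [← heq]
  exact hφdiff
end

section
/- Let f : [0, ∞) → ℝ be convex with f(0) ≤ 0, and let A be a positive semidefinite nonzero n×n complex matrix. If φ is a unital positive linear map on matrices, then φ(f(A)) ≤ (f(‖A‖)/‖A‖)·φ(A). -/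
open Matrix
open scoped ComplexOrder Classical

theorem stmt_4 {n : ℕ} (f : ℝ → ℝ) (hf : ConvexOn ℝ (Set.Ici 0) f) (hf0 : f 0 ≤ 0)
    (A : Matrix (Fin n) (Fin n) ℂ) (hA : A.PosSemidef) (hA0 : A ≠ 0)
    (φ : Matrix (Fin n) (Fin n) ℂ →ₗ[ℂ] Matrix (Fin n) (Fin n) ℂ)
    (hφ : ∀ B, B.PosSemidef → (φ B).PosSemidef) (hunital : φ 1 = 1) :
    Loewner (φ (fc f A)) ((f (opNorm A) / opNorm A : ℝ) • φ A) := by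
  have h : A.IsHermitian := hA.1
  set c : ℝ := opNorm A with hc
  -- positivity of the norm
  have hcpos : 0 < c := by
    rw [hc, opNorm, norm_pos_iff]
    intro hzero
    apply hA0
    have := (EmbeddingLike.map_eq_zero_iff
      (f := Matrix.toEuclideanCLM (𝕜 := ℂ) (n := Fin n))).mp hzero
    exact this
  -- eigenvalue bounds
  have hev0 : ∀ i, 0 ≤ h.eigenvalues i := hA.eigenvalues_nonneg
  have hevc : ∀ i, h.eigenvalues i ≤ c := by
    intro i
    have hmem : ((h.eigenvalues i : ℝ) : ℂ) ∈ spectrum ℂ A :=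
      spectrum.algebraMap_mem ℂ (h.eigenvalues_mem_spectrum_real i)
    have hmem2 : ((h.eigenvalues i : ℝ) : ℂ) ∈
        spectrum ℂ (Matrix.toEuclideanCLM (𝕜 := ℂ) (n := Fin n) A) := by
      rwa [AlgEquiv.spectrum_eq (Matrix.toEuclideanCLM (𝕜 := ℂ) (n := Fin n))]
    have hnontriv : Nontrivial (EuclideanSpace ℂ (Fin n)) := by
      rcases Nat.eq_zero_or_pos n with h0 | h0
      · subst h0; exact absurd (Subsingleton.elim A 0) hA0
      · haveI : NeZero n := ⟨h0.ne'⟩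
        infer_instance
    have := spectrum.norm_le_norm_of_mem hmem2
    calc h.eigenvalues i ≤ |h.eigenvalues i| := le_abs_self _
      _ = ‖((h.eigenvalues i : ℝ) : ℂ)‖ := by simp
      _ ≤ c := this
  -- the scalar bound from convexity
  have key : ∀ x : ℝ, 0 ≤ x → x ≤ c → f x ≤ f c / c * x := by
    intro x hx hxc
    have ha : (0:ℝ) ≤ 1 - x / c := by
      have : x / c ≤ 1 := (div_le_one hcpos).mpr hxc
      linarith
    have hb : (0:ℝ) ≤ x / c := div_nonneg hx hcpos.le
    have hab : (1 - x / c) + x / c = 1 := by ring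
    have hcomb := hf.2 (Set.mem_Ici.mpr le_rfl) (Set.mem_Ici.mpr hcpos.le) ha hb hab
    have hxeq : (1 - x / c) • (0:ℝ) + (x / c) • c = x := by
      rw [smul_eq_mul, smul_eq_mul, mul_zero, zero_add]
      exact div_mul_cancel₀ x hcpos.ne'
    rw [hxeq] at hcomb
    have h1 : (1 - x / c) • f 0 ≤ 0 := mul_nonpos_of_nonneg_of_nonpos ha hf0
    have : f x ≤ (x / c) * f c := by
      have := hcomb
      simp only [smul_eq_mul] at this h1 ⊢
      linarith
    calc f x ≤ x / c * f c := this
      _ = f c / c * x := by ring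
  -- the matrix inequality before applying φ
  set r : ℝ := f c / c with hr
  have hmat : ((r : ℝ) • A - fc f A).PosSemidef := by
    rw [fc, dif_pos h]
    have hAeq := h.spectral_theorem
    have hsmul : (r : ℝ) • A =
        (h.eigenvectorUnitary : Matrix (Fin n) (Fin n) ℂ) *
          Matrix.diagonal (fun i => ((r * h.eigenvalues i : ℝ) : ℂ)) *
          (star h.eigenvectorUnitary : Matrix (Fin n) (Fin n) ℂ) := by
      have hdiag2 : (Matrix.diagonal fun i => ((r * h.eigenvalues i : ℝ) : ℂ))
          = (r : ℝ) • Matrix.diagonal (RCLike.ofReal ∘ h.eigenvalues) := by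
        ext i j
        rw [Matrix.smul_apply, Matrix.diagonal_apply, Matrix.diagonal_apply]
        split <;> simp [Complex.real_smul]
      conv_lhs => rw [hAeq]
      rw [hdiag2, mul_smul_comm, smul_mul_assoc]
      rw [Unitary.conjStarAlgAut_apply]
    rw [hsmul, ← Matrix.sub_mul, ← Matrix.mul_sub, Matrix.diagonal_sub]
    have hdiag : (Matrix.diagonal
        (fun i => ((r * h.eigenvalues i : ℝ) : ℂ) - (f (h.eigenvalues i) : ℂ))).PosSemidef := by
      rw [Matrix.posSemidef_diagonal_iff]
      intro i
      have : f (h.eigenvalues i) ≤ r * h.eigenvalues i := key _ (hev0 i) (hevc i)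
      have hcast : ((r * h.eigenvalues i : ℝ) : ℂ) - (f (h.eigenvalues i) : ℂ)
          = ((r * h.eigenvalues i - f (h.eigenvalues i) : ℝ) : ℂ) := by push_cast; ring
      rw [hcast]
      exact_mod_cast sub_nonneg.mpr this
    have := hdiag.mul_mul_conjTranspose_same
      (h.eigenvectorUnitary : Matrix (Fin n) (Fin n) ℂ)
    simpa [Matrix.star_eq_conjTranspose, mul_assoc] using this
  -- apply φ
  have hφmat := hφ _ hmat
  have heq : φ ((r : ℝ) • A - fc f A) = (r : ℝ) • φ A - φ (fc f A) := by
    have h1 : (r : ℝ) • A = ((r : ℂ)) • A := by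
      ext i j; simp [Complex.real_smul]
    have h2 : (r : ℝ) • φ A = ((r : ℂ)) • φ A := by
      ext i j; simp [Complex.real_smul]
    rw [map_sub, h1, h2, LinearMap.map_smul]
  rw [heq] at hφmat
  exact hφmat
end

section
/- Let f : [0, ∞) → ℝ be increasing and convex with f(0) ≤ 0, with subdifferential function k. Let x₁, ..., xₙ be positive semidefinite matrices with spectra in [m, M] ⊂ [0, ∞), and φ₁, ..., φₙ positive linear maps on matrices with ∑ᵢ φᵢ(1) = 1. Then f(‖∑ᵢ φᵢ(xᵢ)‖) ≤ ‖∑ᵢ φᵢ(f(xᵢ))‖, where ‖·‖ is the operator norm. -/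
open Matrix
open scoped ComplexOrder Classical

lemma psd_clm {n : ℕ} {A : Matrix (Fin n) (Fin n) ℂ} (hA : A.PosSemidef) :
    0 ≤ toEuclideanCLM (𝕜 := ℂ) A := by
  obtain ⟨B, rfl⟩ : ∃ B : Matrix (Fin n) (Fin n) ℂ, A = Bᴴ * B := by
    open scoped MatrixOrder in exact CStarAlgebra.nonneg_iff_eq_star_mul_self.mp hA.nonneg
  rw [show Bᴴ * B = star B * B from rfl, _root_.map_mul, map_star]
  exact star_mul_self_nonneg _

lemma opNorm_mono {n : ℕ} {A B : Matrix (Fin n) (Fin n) ℂ} (hA : A.PosSemidef)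
    (hAB : (B - A).PosSemidef) : opNorm A ≤ opNorm B := by
  have h1 := psd_clm hA
  have h2 := psd_clm hAB
  rw [map_sub] at h2
  exact CStarAlgebra.norm_le_norm_of_nonneg_of_le h1 (sub_nonneg.mp h2)

lemma psd_smul {n : ℕ} {A : Matrix (Fin n) (Fin n) ℂ} (hA : A.PosSemidef)
    {κ : ℝ} (hκ : 0 ≤ κ) : ((κ:ℂ) • A).PosSemidef := by
  obtain ⟨B, rfl⟩ : ∃ B : Matrix (Fin n) (Fin n) ℂ, A = Bᴴ * B := by
    open scoped MatrixOrder in exact CStarAlgebra.nonneg_iff_eq_star_mul_self.mp hA.nonneg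
  refine (show ∀ C : Matrix (Fin n) (Fin n) ℂ, (κ:ℂ) • (Bᴴ * B) = Cᴴ * C →
      ((κ:ℂ) • (Bᴴ * B)).PosSemidef from fun C hC => by
        rw [hC]; exact posSemidef_conjTranspose_mul_self C) (((Real.sqrt κ : ℝ) : ℂ) • B) ?_
  rw [Matrix.conjTranspose_smul, smul_mul_assoc, mul_smul_comm, smul_smul]
  congr 1
  rw [Complex.star_def, Complex.conj_ofReal, ← Complex.ofReal_mul,
    Real.mul_self_sqrt hκ]

lemma psd_sum {n N : ℕ} (g : Fin N → Matrix (Fin n) (Fin n) ℂ)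
    (hg : ∀ i, (g i).PosSemidef) : (∑ i, g i).PosSemidef := by
  refine Finset.sum_induction g _ (fun a b ha hb => ha.add hb)
    Matrix.PosSemidef.zero (fun i _ => hg i)

lemma supporting {n : ℕ} {A : Matrix (Fin n) (Fin n) ℂ} (h : A.IsHermitian) (f : ℝ → ℝ)
    (c κ : ℝ) (hpt : ∀ j, κ * (h.eigenvalues j) ≤ f (h.eigenvalues j) + c) :
    (fc f A + (c:ℂ) • 1 - (κ:ℂ) • A).PosSemidef := by
  set U : Matrix (Fin n) (Fin n) ℂ := (h.eigenvectorUnitary : Matrix (Fin n) (Fin n) ℂ) with hUdef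
  have hU : U * star U = 1 := Matrix.mem_unitaryGroup_iff.mp h.eigenvectorUnitary.2
  set g : Fin n → ℂ := fun j => ((f (h.eigenvalues j) + c - κ * h.eigenvalues j : ℝ) : ℂ) with hg
  have key : fc f A + (c:ℂ) • 1 - (κ:ℂ) • A = U * Matrix.diagonal g * star U := by
    have hdiag : Matrix.diagonal g =
        Matrix.diagonal (fun j => (f (h.eigenvalues j) : ℂ)) + (c:ℂ) • 1
          - (κ:ℂ) • Matrix.diagonal ((RCLike.ofReal (K := ℂ)) ∘ h.eigenvalues) := by
      ext i j
      by_cases hij : i = j <;>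
        simp [hg, Matrix.diagonal_apply, Matrix.one_apply, hij]
    rw [hdiag]
    simp only [sub_mul, mul_sub, add_mul, mul_add, smul_mul_assoc, mul_smul_comm, mul_one]
    rw [hU, fc, dif_pos h]
    congr 1
    conv_lhs => rw [h.spectral_theorem, Unitary.conjStarAlgAut_apply]
  rw [key]
  refine Matrix.PosSemidef.mul_mul_conjTranspose_same ?_ U
  refine Matrix.posSemidef_diagonal_iff.mpr fun j => ?_
  rw [hg, RCLike.nonneg_iff]
  constructor <;> simp
  linarith [hpt j]

theorem stmt_6 {n N : ℕ} (m M : ℝ) (hm : 0 ≤ m) (hmM : m < M) (f k : ℝ → ℝ)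
    (hmono : MonotoneOn f (Set.Ici 0)) (hf : ConvexOn ℝ (Set.Ici 0) f) (hf0 : f 0 ≤ 0)
    (hk : ∀ y ∈ Set.Ici (0 : ℝ), ∀ t ∈ Set.Ici (0 : ℝ), f y + k y * (t - y) ≤ f t)
    (x : Fin N → Matrix (Fin n) (Fin n) ℂ) (hx : ∀ i, (x i).PosSemidef)
    (hspec : ∀ i j, ((hx i).1).eigenvalues j ∈ Set.Icc m M)
    (φ : Fin N → (Matrix (Fin n) (Fin n) ℂ →ₗ[ℂ] Matrix (Fin n) (Fin n) ℂ))
    (hφ : ∀ i A, A.PosSemidef → (φ i A).PosSemidef)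
    (hunital : ∑ i, φ i 1 = 1) :
    f (opNorm (∑ i, φ i (x i))) ≤ opNorm (∑ i, φ i (fc f (x i))) := by
  set S : Matrix (Fin n) (Fin n) ℂ := ∑ i, φ i (x i) with hS
  set T : Matrix (Fin n) (Fin n) ℂ := ∑ i, φ i (fc f (x i)) with hT
  set y : ℝ := opNorm S with hy
  have hy0 : 0 ≤ y := norm_nonneg _
  have hTnn : 0 ≤ opNorm T := norm_nonneg _
  by_cases hfy : f y ≤ 0
  · linarith
  push_neg at hfy
  set κ : ℝ := k y with hκdef
  have h0 := hk y (Set.mem_Ici.mpr hy0) 0 Set.self_mem_Ici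
  -- f y + κ * (0 - y) ≤ f 0
  have hκy : f y - f 0 ≤ κ * y := by nlinarith [h0]
  have hylt : 0 < y := by
    rcases lt_or_eq_of_le hy0 with h | h
    · exact h
    · exfalso; rw [← h] at hfy; linarith
  have hκ0 : 0 ≤ κ := by
    nlinarith [hκy, hfy, hf0, hylt]
  set c : ℝ := κ * y - f y with hc
  have hc0 : 0 ≤ c := by
    have := hκy; simp only [hc]; linarith
  -- supporting line for each x i
  have hsupp : ∀ i, (fc f (x i) + (c:ℂ) • 1 - (κ:ℂ) • (x i)).PosSemidef := by
    intro i
    refine supporting (hx i).1 f c κ fun j => ?_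
    have hlam : (hx i).1.eigenvalues j ∈ Set.Ici (0:ℝ) :=
      Set.mem_Ici.mpr (le_trans hm (hspec i j).1)
    have := hk y (Set.mem_Ici.mpr hy0) _ hlam
    simp only [hc]; nlinarith [this]
  -- apply the positive maps and sum
  have hsum : (T + (c:ℂ) • 1 - (κ:ℂ) • S).PosSemidef := by
    have heq : T + (c:ℂ) • 1 - (κ:ℂ) • S
        = ∑ i, φ i (fc f (x i) + (c:ℂ) • 1 - (κ:ℂ) • (x i)) := by
      simp only [map_sub, map_add, _root_.map_smul, Finset.sum_sub_distrib, Finset.sum_add_distrib,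
        ← Finset.smul_sum, hunital, hT, hS]
    rw [heq]
    exact psd_sum _ fun i => hφ i _ (hsupp i)
  have hSpsd : S.PosSemidef := psd_sum _ fun i => hφ i _ (hx i)
  have h1 : opNorm ((κ:ℂ) • S) ≤ opNorm (T + (c:ℂ) • 1) := by
    refine opNorm_mono (psd_smul hSpsd hκ0) ?_
    convert hsum using 2
  have h2 : opNorm ((κ:ℂ) • S) = κ * y := by
    rw [opNorm, _root_.map_smul,
      norm_smul (β := EuclideanSpace ℂ (Fin n) →L[ℂ] EuclideanSpace ℂ (Fin n)) ((κ:ℂ))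
        (toEuclideanCLM (𝕜 := ℂ) S),
      Complex.norm_real, Real.norm_eq_abs, abs_of_nonneg hκ0]
    rfl
  have h3 : opNorm (T + (c:ℂ) • 1) ≤ opNorm T + c := by
    rw [opNorm, map_add, _root_.map_smul, _root_.map_one]
    refine le_trans (norm_add_le _ _) (add_le_add le_rfl ?_)
    rw [norm_smul (β := EuclideanSpace ℂ (Fin n) →L[ℂ] EuclideanSpace ℂ (Fin n)) ((c:ℂ))
        (1 : EuclideanSpace ℂ (Fin n) →L[ℂ] EuclideanSpace ℂ (Fin n)),
      Complex.norm_real, Real.norm_eq_abs, abs_of_nonneg hc0]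
    calc c * ‖(1 : EuclideanSpace ℂ (Fin n) →L[ℂ] EuclideanSpace ℂ (Fin n))‖
        ≤ c * 1 := by
          refine mul_le_mul_of_nonneg_left ?_ hc0
          rw [ContinuousLinearMap.one_def]
          exact ContinuousLinearMap.norm_id_le
      _ = c := mul_one c
  have : κ * y ≤ opNorm T + c := by rw [← h2]; exact le_trans h1 h3
  simp only [hc] at this
  linarith
end

section
/- Let f : [0, ∞) → ℝ be increasing and concave. Let x₁, ..., xₙ be positive semidefinite matrices and φ₁, ..., φₙ positive linear maps on matrices with ∑ᵢ φᵢ(1) = 1, and assume ∑ᵢ φᵢ(xᵢ) ≤ ‖∑ᵢ φᵢ(xᵢ)‖·1 (which holds for the operator norm). Then ∑ᵢ φᵢ(f(xᵢ)) ≤ f(‖∑ᵢ φᵢ(xᵢ)‖)·1. -/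
open Matrix
open scoped ComplexOrder Classical

lemma real_smul_eqc {n : ℕ} (r : ℝ) (M : Matrix (Fin n) (Fin n) ℂ) :
    r • M = (r : ℂ) • M := by
  ext i j
  simp [Complex.real_smul]

lemma psd_real_smul {n : ℕ} {M : Matrix (Fin n) (Fin n) ℂ} (hM : M.PosSemidef)
    {r : ℝ} (hr : 0 ≤ r) : (r • M).PosSemidef := by
  rw [real_smul_eqc]
  refine ⟨?_, ?_⟩
  · unfold Matrix.IsHermitian
    rw [conjTranspose_smul, hM.1.eq]
    congr 1
    simp
  · intro v
    have hr' : (0 : ℂ) ≤ (r : ℂ) := by exact_mod_cast hr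
    have h := mul_nonneg hr' (hM.2 v)
    refine le_of_le_of_eq h ?_
    simp only [Finsupp.sum, Finset.mul_sum, Matrix.smul_apply, smul_eq_mul]
    refine Finset.sum_congr rfl (fun i _ => Finset.sum_congr rfl (fun j _ => ?_))
    ring

lemma loewner_trans {n : ℕ} {A B C : Matrix (Fin n) (Fin n) ℂ}
    (h1 : Loewner A B) (h2 : Loewner B C) : Loewner A C := by
  have := h2.add h1
  simpa [Loewner, sub_add_sub_cancel] using this

/-- Key spectral estimate: if `f λⱼ ≤ c + k λⱼ` for each eigenvalue, then
`fc f A ≤ c•1 + k•A`. -/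
lemma fc_le {n : ℕ} (f : ℝ → ℝ) {A : Matrix (Fin n) (Fin n) ℂ} (hA : A.IsHermitian)
    (c k : ℝ) (h : ∀ j, f (hA.eigenvalues j) ≤ c + k * hA.eigenvalues j) :
    Loewner (fc f A) ((c : ℝ) • (1 : Matrix (Fin n) (Fin n) ℂ) + (k : ℝ) • A) := by
  unfold Loewner fc
  rw [dif_pos hA]
  set U : Matrix (Fin n) (Fin n) ℂ := (hA.eigenvectorUnitary : Matrix (Fin n) (Fin n) ℂ)
  have hU : U * star U = 1 :=
    (Matrix.mem_unitaryGroup_iff).mp (hA.eigenvectorUnitary).2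
  have hs : A = U * Matrix.diagonal (RCLike.ofReal ∘ hA.eigenvalues) * star U :=
    hA.spectral_theorem
  have key : (c : ℝ) • (1 : Matrix (Fin n) (Fin n) ℂ) + (k : ℝ) • A -
      U * Matrix.diagonal (fun i => (f (hA.eigenvalues i) : ℂ)) * star U =
      U * Matrix.diagonal
        (fun i => ((c + k * hA.eigenvalues i - f (hA.eigenvalues i) : ℝ) : ℂ)) * star U := by
    have hD : Matrix.diagonal
        (fun i => ((c + k * hA.eigenvalues i - f (hA.eigenvalues i) : ℝ) : ℂ)) =
        (c : ℂ) • (1 : Matrix (Fin n) (Fin n) ℂ) +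
          (k : ℂ) • Matrix.diagonal (RCLike.ofReal ∘ hA.eigenvalues) -
          Matrix.diagonal (fun i => (f (hA.eigenvalues i) : ℂ)) := by
      ext i j
      by_cases hij : i = j
      · subst hij
        simp [Matrix.diagonal, Matrix.one_apply]
      · simp [Matrix.diagonal, Matrix.one_apply, hij]
    rw [hD]
    rw [Matrix.mul_sub, Matrix.sub_mul, Matrix.mul_add, Matrix.add_mul]
    congr 1
    congr 1
    · rw [Matrix.mul_smul, Matrix.smul_mul, mul_one, hU, real_smul_eqc]
    · rw [Matrix.mul_smul, Matrix.smul_mul, real_smul_eqc]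
      exact congrArg (fun M => (k : ℂ) • M) hs
  rw [key]
  have hdiag : (Matrix.diagonal
      (fun i => ((c + k * hA.eigenvalues i - f (hA.eigenvalues i) : ℝ) : ℂ))).PosSemidef := by
    rw [Matrix.posSemidef_diagonal_iff]
    intro i
    rw [Complex.zero_le_real]
    linarith [h i]
  simpa [Matrix.star_eq_conjTranspose] using hdiag.mul_mul_conjTranspose_same U

theorem stmt_7 {n N : ℕ} (f : ℝ → ℝ)
    (hmono : MonotoneOn f (Set.Ici 0)) (hf : ConcaveOn ℝ (Set.Ici 0) f)
    (x : Fin N → Matrix (Fin n) (Fin n) ℂ) (hx : ∀ i, (x i).PosSemidef)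
    (φ : Fin N → (Matrix (Fin n) (Fin n) ℂ →ₗ[ℂ] Matrix (Fin n) (Fin n) ℂ))
    (hφ : ∀ i A, A.PosSemidef → (φ i A).PosSemidef)
    (hunital : ∑ i, φ i 1 = 1)
    (hbound : Loewner (∑ i, φ i (x i))
      ((opNorm (∑ i, φ i (x i)) : ℝ) • (1 : Matrix (Fin n) (Fin n) ℂ))) :
    Loewner (∑ i, φ i (fc f (x i)))
      ((f (opNorm (∑ i, φ i (x i))) : ℝ) • (1 : Matrix (Fin n) (Fin n) ℂ)) := by
  set y : ℝ := opNorm (∑ i, φ i (x i)) with hy_def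
  have hy0 : (0 : ℝ) ≤ y := norm_nonneg _
  set g : Fin N → Fin n → ℝ := fun i j => (hx i).1.eigenvalues j with hg_def
  have hg0 : ∀ i j, 0 ≤ g i j := fun i j => (hx i).eigenvalues_nonneg j
  -- the "slope" constant k
  set S : Finset ℝ := insert 0 (Finset.image
    (fun p : Fin N × Fin n => if y < g p.1 p.2 then (f (g p.1 p.2) - f y) / (g p.1 p.2 - y) else 0)
    Finset.univ) with hS_def
  have hSne : S.Nonempty := ⟨0, Finset.mem_insert_self _ _⟩
  set k : ℝ := S.max' hSne with hk_def
  have hk0 : 0 ≤ k := Finset.le_max' _ _ (Finset.mem_insert_self _ _)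
  have hkub : ∀ i j, y < g i j → (f (g i j) - f y) / (g i j - y) ≤ k := by
    intro i j hij
    refine Finset.le_max' _ _ ?_
    refine Finset.mem_insert_of_mem (Finset.mem_image.2 ⟨(i, j), Finset.mem_univ _, ?_⟩)
    rw [if_pos hij]
  have hklb : ∀ t : ℝ, 0 ≤ t → t < y → k ≤ (f y - f t) / (y - t) := by
    intro t ht hty
    refine Finset.max'_le _ _ _ ?_
    intro b hb
    have hy' : (0:ℝ) ≤ y := le_of_lt (lt_of_le_of_lt ht hty)
    have hft : f t ≤ f y := hmono (Set.mem_Ici.2 ht) (Set.mem_Ici.2 hy') (le_of_lt hty)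
    have hslope_nonneg : 0 ≤ (f y - f t) / (y - t) :=
      div_nonneg (by linarith) (by linarith)
    rcases Finset.mem_insert.1 hb with rfl | hb
    · exact hslope_nonneg
    · rcases Finset.mem_image.1 hb with ⟨p, -, rfl⟩
      by_cases hcond : y < g p.1 p.2
      · rw [if_pos hcond]
        exact hf.slope_anti_adjacent (Set.mem_Ici.2 ht) (Set.mem_Ici.2 (hg0 p.1 p.2)) hty hcond
      · rw [if_neg hcond]
        exact hslope_nonneg
  -- pointwise scalar inequality at all eigenvalues
  have hscalar : ∀ i j, f (g i j) ≤ (f y - k * y) + k * g i j := by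
    intro i j
    rcases lt_trichotomy (g i j) y with hlt | heq | hgt
    · have h1 := hklb (g i j) (hg0 i j) hlt
      rw [le_div_iff₀ (by linarith)] at h1
      nlinarith
    · rw [heq]; nlinarith
    · have h1 := hkub i j hgt
      rw [div_le_iff₀ (by linarith)] at h1
      nlinarith
  -- matrix inequality for each i
  have step1 : ∀ i, Loewner (fc f (x i))
      ((f y - k * y) • (1 : Matrix (Fin n) (Fin n) ℂ) + k • x i) := by
    intro i
    exact fc_le f (hx i).1 (f y - k * y) k (hscalar i)
  -- push through the positive maps and sum
  have step2 : Loewner (∑ i, φ i (fc f (x i)))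
      (∑ i, φ i ((f y - k * y) • (1 : Matrix (Fin n) (Fin n) ℂ) + k • x i)) := by
    unfold Loewner
    rw [← Finset.sum_sub_distrib]
    refine Finset.sum_induction _ Matrix.PosSemidef (fun a b ha hb => ha.add hb)
      (Matrix.PosSemidef.zero) ?_
    intro i _
    rw [← map_sub]
    exact hφ i _ (step1 i)
  have hsum_eq : (∑ i, φ i ((f y - k * y) • (1 : Matrix (Fin n) (Fin n) ℂ) + k • x i)) =
      (f y - k * y) • (1 : Matrix (Fin n) (Fin n) ℂ) + k • ∑ i, φ i (x i) := by
    have : ∀ i, φ i ((f y - k * y) • (1 : Matrix (Fin n) (Fin n) ℂ) + k • x i) =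
        (f y - k * y) • (φ i 1) + k • (φ i (x i)) := by
      intro i
      rw [map_add, real_smul_eqc, real_smul_eqc, _root_.map_smul, _root_.map_smul,
        ← real_smul_eqc, ← real_smul_eqc]
    rw [Finset.sum_congr rfl (fun i _ => this i), Finset.sum_add_distrib,
      ← Finset.smul_sum, ← Finset.smul_sum, hunital]
  have step3 : Loewner ((f y - k * y) • (1 : Matrix (Fin n) (Fin n) ℂ) + k • ∑ i, φ i (x i))
      ((f y - k * y) • (1 : Matrix (Fin n) (Fin n) ℂ) + k • (y • (1 : Matrix (Fin n) (Fin n) ℂ))) := by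
    unfold Loewner
    have : ((f y - k * y) • (1 : Matrix (Fin n) (Fin n) ℂ) + k • (y • (1 : Matrix (Fin n) (Fin n) ℂ))) -
        ((f y - k * y) • (1 : Matrix (Fin n) (Fin n) ℂ) + k • ∑ i, φ i (x i)) =
        k • ((y • (1 : Matrix (Fin n) (Fin n) ℂ)) - ∑ i, φ i (x i)) := by
      rw [smul_sub]; abel
    rw [this]
    exact psd_real_smul hbound hk0
  have hfinal_eq : ((f y - k * y) • (1 : Matrix (Fin n) (Fin n) ℂ) +
      k • (y • (1 : Matrix (Fin n) (Fin n) ℂ))) = (f y) • (1 : Matrix (Fin n) (Fin n) ℂ) := by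
    rw [smul_smul, ← add_smul]
    ring_nf
  rw [hsum_eq] at step2
  rw [hfinal_eq] at step3
  exact loewner_trans step2 step3
end

section
/- Let A₁, ..., Aₙ be positive semidefinite matrices on ℂ^d with spectra in [m, M], 0 < m < M, and let x₁, ..., xₙ ∈ ℂ^d be vectors with ∑ᵢ ‖xᵢ‖² = 1. Then for p ≥ 1, q ≥ 1, and λ ≥ 0: (∑ᵢ ⟨Aᵢᵖ xᵢ, xᵢ⟩)^{1/q} − λ ∑ᵢ ⟨Aᵢ xᵢ, xᵢ⟩ ≤ max_{m ≤ z ≤ M} ((α_p z + β_p)^{1/q} − λ z), where α_p = (Mᵖ − mᵖ)/(M − m) and β_p = (M mᵖ − m Mᵖ)/(M − m). -/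
open Matrix
open scoped ComplexOrder Classical

lemma fc_quad {n : ℕ} (f : ℝ → ℝ) (A : Matrix (Fin n) (Fin n) ℂ) (h : A.IsHermitian)
    (x : Fin n → ℂ) :
    (star x ⬝ᵥ (fc f A) *ᵥ x).re =
      ∑ j, f (h.eigenvalues j) *
        ‖((star h.eigenvectorUnitary : Matrix (Fin n) (Fin n) ℂ) *ᵥ x) j‖^2 := by
  rw [fc, dif_pos h]
  set U := (h.eigenvectorUnitary : Matrix (Fin n) (Fin n) ℂ)
  set c := (star U) *ᵥ x with hc
  have h1 : star x ⬝ᵥ (U * Matrix.diagonal (fun i => (f (h.eigenvalues i) : ℂ)) * star U) *ᵥ x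
      = star c ⬝ᵥ (Matrix.diagonal (fun i => (f (h.eigenvalues i) : ℂ))) *ᵥ c := by
    rw [← mulVec_mulVec, ← mulVec_mulVec, dotProduct_mulVec, hc, star_mulVec,
      Matrix.star_eq_conjTranspose, conjTranspose_conjTranspose]
  rw [h1]
  simp only [dotProduct, mulVec_diagonal, Complex.re_sum, Pi.star_apply]
  refine Finset.sum_congr rfl fun j _ => ?_
  have h2 : (starRingEnd ℂ) (c j) * (((f (h.eigenvalues j)) : ℂ) * c j)
      = (f (h.eigenvalues j) : ℂ) * (‖c j‖ : ℂ)^2 := by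
    rw [← Complex.mul_conj']; ring
  rw [show star (c j) = (starRingEnd ℂ) (c j) from rfl, h2]
  rw [← Complex.ofReal_pow, ← Complex.ofReal_mul, Complex.ofReal_re]

lemma quad_A {n : ℕ} (A : Matrix (Fin n) (Fin n) ℂ) (h : A.IsHermitian) (x : Fin n → ℂ) :
    (star x ⬝ᵥ A *ᵥ x).re =
      ∑ j, (h.eigenvalues j) *
        ‖((star h.eigenvectorUnitary : Matrix (Fin n) (Fin n) ℂ) *ᵥ x) j‖^2 := by
  have hfc : fc (fun t => t) A = A := by
    rw [fc, dif_pos h]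
    exact (h.spectral_theorem).symm
  conv_lhs => rw [← hfc]
  exact fc_quad _ A h x

lemma quad_one {n : ℕ} (A : Matrix (Fin n) (Fin n) ℂ) (h : A.IsHermitian) (x : Fin n → ℂ) :
    (star x ⬝ᵥ x).re =
      ∑ j, ‖((star h.eigenvectorUnitary : Matrix (Fin n) (Fin n) ℂ) *ᵥ x) j‖^2 := by
  have hfc : fc (fun _ => 1) A = 1 := by
    rw [fc, dif_pos h]
    simp only [Complex.ofReal_one, Matrix.diagonal_one, mul_one]
    exact Matrix.mem_unitaryGroup_iff.mp h.eigenvectorUnitary.2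
  have := fc_quad (fun _ => 1) A h x
  rw [hfc] at this
  simpa using this

lemma chord {m M p : ℝ} (hm : 0 < m) (hmM : m < M) (hp : 1 ≤ p) {t : ℝ}
    (htm : m ≤ t) (htM : t ≤ M) :
    t ^ p ≤ (M ^ p - m ^ p) / (M - m) * t + (M * m ^ p - m * M ^ p) / (M - m) := by
  have hMm : (0:ℝ) < M - m := by linarith
  set a := (M - t)/(M - m) with ha'
  set b := (t - m)/(M - m) with hb'
  have ha : 0 ≤ a := div_nonneg (by linarith) hMm.le
  have hb : 0 ≤ b := div_nonneg (by linarith) hMm.le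
  have hab : a + b = 1 := by rw [ha', hb']; field_simp; ring
  have hcomb : a * m + b * M = t := by rw [ha', hb']; field_simp; ring
  have hcv := (convexOn_rpow hp).2 (Set.mem_Ici.mpr hm.le)
    (Set.mem_Ici.mpr (by linarith : (0:ℝ) ≤ M)) ha hb hab
  simp only [smul_eq_mul] at hcv
  rw [hcomb] at hcv
  have heq : a * m ^ p + b * M ^ p =
      (M ^ p - m ^ p) / (M - m) * t + (M * m ^ p - m * M ^ p) / (M - m) := by
    rw [ha', hb']; field_simp; ring
  linarith

theorem stmt_8 {d N : ℕ} (m M p q lam : ℝ) (hm : 0 < m) (hmM : m < M)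
    (hp : 1 ≤ p) (hq : 1 ≤ q) (hlam : 0 ≤ lam)
    (A : Fin N → Matrix (Fin d) (Fin d) ℂ) (hA : ∀ i, (A i).PosSemidef)
    (hspec : ∀ i j, ((hA i).1).eigenvalues j ∈ Set.Icc m M)
    (x : Fin N → (Fin d → ℂ)) (hx : ∑ i, (star (x i) ⬝ᵥ x i).re = 1) :
    (∑ i, (star (x i) ⬝ᵥ (fc (fun t => t ^ p) (A i)) *ᵥ x i).re) ^ ((1 : ℝ) / q) -
        lam * ∑ i, (star (x i) ⬝ᵥ (A i) *ᵥ x i).re ≤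
      sSup ((fun z => (((M ^ p - m ^ p) / (M - m)) * z +
          (M * m ^ p - m * M ^ p) / (M - m)) ^ ((1 : ℝ) / q) - lam * z) ''
        Set.Icc m M) := by
  have hMm : (0:ℝ) < M - m := by linarith
  have hq0 : (0:ℝ) ≤ 1/q := div_nonneg zero_le_one (by linarith)
  set α := (M ^ p - m ^ p) / (M - m) with hα
  set β := (M * m ^ p - m * M ^ p) / (M - m) with hβ
  set h : ∀ i, (A i).IsHermitian := fun i => (hA i).1 with hh
  set w : Fin N → Fin d → ℝ := fun i j =>
    ‖((star (h i).eigenvectorUnitary : Matrix (Fin d) (Fin d) ℂ) *ᵥ x i) j‖^2 with hwdef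
  have hw : ∀ i j, 0 ≤ w i j := fun i j => sq_nonneg _
  have hsum1 : ∑ i, ∑ j, w i j = 1 := by
    rw [← hx]
    exact Finset.sum_congr rfl fun i _ => (quad_one (A i) (h i) (x i)).symm
  set lamb : Fin N → Fin d → ℝ := fun i j => (h i).eigenvalues j with hlamdef
  have hS : ∑ i, (star (x i) ⬝ᵥ (fc (fun t => t ^ p) (A i)) *ᵥ x i).re
      = ∑ i, ∑ j, (lamb i j) ^ p * w i j :=
    Finset.sum_congr rfl fun i _ => fc_quad _ (A i) (h i) (x i)
  have hT : ∑ i, (star (x i) ⬝ᵥ (A i) *ᵥ x i).re = ∑ i, ∑ j, lamb i j * w i j :=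
    Finset.sum_congr rfl fun i _ => quad_A (A i) (h i) (x i)
  rw [hS, hT]
  set z := ∑ i, ∑ j, lamb i j * w i j with hz
  set S := ∑ i, ∑ j, (lamb i j) ^ p * w i j with hSdef
  have hzm : m ≤ z := by
    calc m = ∑ i, ∑ j, m * w i j := by
          simp only [← Finset.mul_sum]; rw [hsum1, mul_one]
      _ ≤ z := Finset.sum_le_sum fun i _ => Finset.sum_le_sum fun j _ =>
          mul_le_mul_of_nonneg_right (hspec i j).1 (hw i j)
  have hzM : z ≤ M := by
    calc z ≤ ∑ i, ∑ j, M * w i j := Finset.sum_le_sum fun i _ => Finset.sum_le_sum fun j _ =>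
          mul_le_mul_of_nonneg_right (hspec i j).2 (hw i j)
      _ = M := by simp only [← Finset.mul_sum]; rw [hsum1, mul_one]
  have hS0 : 0 ≤ S := Finset.sum_nonneg fun i _ => Finset.sum_nonneg fun j _ =>
    mul_nonneg (Real.rpow_nonneg (le_trans hm.le (hspec i j).1) p) (hw i j)
  have hSle : S ≤ α * z + β := by
    calc S ≤ ∑ i, ∑ j, (α * lamb i j + β) * w i j :=
          Finset.sum_le_sum fun i _ => Finset.sum_le_sum fun j _ =>
            mul_le_mul_of_nonneg_right (chord hm hmM hp (hspec i j).1 (hspec i j).2) (hw i j)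
      _ = ∑ i, ∑ j, (α * (lamb i j * w i j) + β * w i j) :=
          Finset.sum_congr rfl fun i _ => Finset.sum_congr rfl fun j _ => by ring
      _ = α * z + β * ∑ i, ∑ j, w i j := by
          simp only [Finset.sum_add_distrib, ← Finset.mul_sum]; rfl
      _ = α * z + β := by rw [hsum1, mul_one]
  have hmain : S ^ ((1:ℝ)/q) - lam * z ≤ (α * z + β) ^ ((1:ℝ)/q) - lam * z := by
    have := Real.rpow_le_rpow hS0 hSle hq0
    linarith
  refine hmain.trans (le_csSup ?_ ⟨z, ⟨hzm, hzM⟩, rfl⟩)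
  apply IsCompact.bddAbove_image isCompact_Icc
  apply ContinuousOn.sub
  · exact ContinuousOn.rpow_const (by fun_prop) (fun t _ => Or.inr hq0)
  · fun_prop
end

section
/- Let f : [m, M] → ℝ be convex, g : [m, M] → ℝ arbitrary, and F : ℝ × ℝ → ℝ bounded and monotone increasing in the first variable. Let x₁, ..., xₙ be Hermitian matrices with spectra in [m, M], w₁, ..., wₙ ≥ 0 with ∑ wᵢ = 1, and let τ denote the normalized trace. Then F(∑ᵢ wᵢ τ(f(xᵢ)), g(∑ᵢ wᵢ τ(xᵢ))) ≤ max_{m ≤ z ≤ M} F(α_f z + β_f, g(z)), where α_f = (f(M) − f(m))/(M − m) and β_f = (M f(m) − m f(M))/(M − m). -/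
open Matrix
open scoped ComplexOrder Classical

lemma trace_udu {n : ℕ} {A : Matrix (Fin n) (Fin n) ℂ} (hA : A.IsHermitian)
    (d : Fin n → ℂ) :
    Matrix.trace ((hA.eigenvectorUnitary : Matrix (Fin n) (Fin n) ℂ) *
      Matrix.diagonal d * (star hA.eigenvectorUnitary : Matrix (Fin n) (Fin n) ℂ)) = ∑ i, d i := by
  rw [Matrix.trace_mul_cycle, Unitary.coe_star_mul_self, one_mul,
    Matrix.trace_diagonal]

lemma trace_fc {n : ℕ} (f : ℝ → ℝ) {A : Matrix (Fin n) (Fin n) ℂ} (hA : A.IsHermitian) :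
    (Matrix.trace (fc f A)).re = ∑ i, f (hA.eigenvalues i) := by
  rw [fc, dif_pos hA, trace_udu]
  simp

lemma trace_herm {n : ℕ} {A : Matrix (Fin n) (Fin n) ℂ} (hA : A.IsHermitian) :
    (Matrix.trace A).re = ∑ i, hA.eigenvalues i := by
  conv_lhs => rw [hA.spectral_theorem]
  rw [Unitary.conjStarAlgAut_apply, trace_udu]
  simp

-- example {n : ℕ} (f : ℝ → ℝ) {A : Matrix (Fin n) (Fin n) ℂ} (hA : A.IsHermitian) : True := trivial

lemma chord_s10 {m M : ℝ} (hmM : m < M) {f : ℝ → ℝ} (hf : ConvexOn ℝ (Set.Icc m M) f)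
    {z : ℝ} (hz : z ∈ Set.Icc m M) :
    f z ≤ (f M - f m) / (M - m) * z + (M * f m - m * f M) / (M - m) := by
  have hMm : (0:ℝ) < M - m := by linarith
  have hne : M - m ≠ 0 := ne_of_gt hMm
  set t := (M - z) / (M - m) with ht
  set s := (z - m) / (M - m) with hs
  have ht0 : 0 ≤ t := div_nonneg (by linarith [hz.2]) hMm.le
  have hs0 : 0 ≤ s := div_nonneg (by linarith [hz.1]) hMm.le
  have hts : t + s = 1 := by rw [ht, hs]; field_simp; ring
  have hcomb : t * m + s * M = z := by rw [ht, hs]; field_simp; ring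
  have := hf.2 (Set.left_mem_Icc.2 hmM.le) (Set.right_mem_Icc.2 hmM.le) ht0 hs0 hts
  rw [smul_eq_mul, smul_eq_mul, smul_eq_mul, smul_eq_mul, hcomb] at this
  refine this.trans (le_of_eq ?_)
  rw [ht, hs]
  field_simp
  ring

theorem stmt_10 {n N : ℕ} (hn : 0 < n) (m M : ℝ) (hmM : m < M) (f g : ℝ → ℝ)
    (hf : ConvexOn ℝ (Set.Icc m M) f)
    (F : ℝ → ℝ → ℝ) (hFb : ∃ C, ∀ u v, |F u v| ≤ C)
    (hFm : ∀ v, Monotone fun u => F u v)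
    (x : Fin N → Matrix (Fin n) (Fin n) ℂ) (hx : ∀ i, (x i).IsHermitian)
    (hspec : ∀ i j, (hx i).eigenvalues j ∈ Set.Icc m M)
    (w : Fin N → ℝ) (hw : ∀ i, 0 ≤ w i) (hw1 : ∑ i, w i = 1) :
    F (∑ i, w i * ((Matrix.trace (fc f (x i))).re / n))
        (g (∑ i, w i * ((Matrix.trace (x i)).re / n))) ≤
      sSup ((fun z => F ((f M - f m) / (M - m) * z + (M * f m - m * f M) / (M - m))
        (g z)) '' Set.Icc m M) := by
  set α := (f M - f m) / (M - m) with hα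
  set β := (M * f m - m * f M) / (M - m) with hβ
  have hnpos : (0:ℝ) < n := Nat.cast_pos.mpr hn
  have hnne : (n:ℝ) ≠ 0 := ne_of_gt hnpos
  -- each normalized trace is in [m, M]
  have hτmem : ∀ i, (Matrix.trace (x i)).re / n ∈ Set.Icc m M := by
    intro i
    have h1 : (Matrix.trace (x i)).re = ∑ j, (hx i).eigenvalues j := trace_herm (hx i)
    constructor
    · rw [le_div_iff₀ hnpos, h1]
      calc m * n = ∑ _j : Fin n, m := by simp [mul_comm]
        _ ≤ _ := Finset.sum_le_sum fun j _ => (hspec i j).1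
    · rw [div_le_iff₀ hnpos, h1]
      calc (∑ j, (hx i).eigenvalues j) ≤ ∑ _j : Fin n, M :=
            Finset.sum_le_sum fun j _ => (hspec i j).2
        _ = M * n := by simp [mul_comm]
  set z₀ := ∑ i, w i * ((Matrix.trace (x i)).re / n) with hz₀
  have hz₀mem : z₀ ∈ Set.Icc m M := by
    constructor
    · calc m = ∑ i, w i * m := by rw [← Finset.sum_mul, hw1, one_mul]
        _ ≤ z₀ := Finset.sum_le_sum fun i _ =>
            mul_le_mul_of_nonneg_left (hτmem i).1 (hw i)
    · calc z₀ ≤ ∑ i, w i * M := Finset.sum_le_sum fun i _ =>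
            mul_le_mul_of_nonneg_left (hτmem i).2 (hw i)
        _ = M := by rw [← Finset.sum_mul, hw1, one_mul]
  have key : ∀ i, (Matrix.trace (fc f (x i))).re / n ≤
      α * ((Matrix.trace (x i)).re / n) + β := by
    intro i
    rw [trace_fc f (hx i), div_le_iff₀ hnpos, trace_herm (hx i)]
    have hsum : ∑ j, f ((hx i).eigenvalues j) ≤
        ∑ j, (α * (hx i).eigenvalues j + β) :=
      Finset.sum_le_sum fun j _ => chord_s10 hmM hf (hspec i j)
    refine hsum.trans (le_of_eq ?_)
    rw [Finset.sum_add_distrib, ← Finset.mul_sum, Finset.sum_const]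
    simp only [Finset.card_univ, Fintype.card_fin, nsmul_eq_mul]
    field_simp
  have hle : (∑ i, w i * ((Matrix.trace (fc f (x i))).re / n)) ≤ α * z₀ + β := by
    calc (∑ i, w i * ((Matrix.trace (fc f (x i))).re / n))
        ≤ ∑ i, w i * (α * ((Matrix.trace (x i)).re / n) + β) :=
          Finset.sum_le_sum fun i _ => mul_le_mul_of_nonneg_left (key i) (hw i)
      _ = α * z₀ + β := by
          rw [hz₀]
          simp only [mul_add, Finset.sum_add_distrib]
          congr 1
          · rw [Finset.mul_sum]
            exact Finset.sum_congr rfl fun i _ => by ring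
          · rw [← Finset.sum_mul, hw1, one_mul]
  obtain ⟨C, hC⟩ := hFb
  have hbdd : BddAbove ((fun z => F (α * z + β) (g z)) '' Set.Icc m M) :=
    ⟨C, by rintro _ ⟨z, _, rfl⟩; exact (abs_le.1 (hC _ _)).2⟩
  have hmem : F (α * z₀ + β) (g z₀) ∈ (fun z => F (α * z + β) (g z)) '' Set.Icc m M :=
    ⟨z₀, hz₀mem, rfl⟩
  calc F (∑ i, w i * ((Matrix.trace (fc f (x i))).re / n)) (g z₀)
      ≤ F (α * z₀ + β) (g z₀) := hFm (g z₀) hle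
    _ ≤ _ := le_csSup hbdd hmem
end
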